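/- On an N×N periodic square lattice, if two Wilson lines w₁ and w₂ cross the lattice in the same direction starting from two different base points, and all plaquette holonomies are trivial, then w₂ = c w₁ c⁻¹ where c is the Wilson line along a path connecting the base point of w₁ to that of w₂. -/

import Mathlib

/-!  Lattice gauge theory on the N×N periodic square lattice (discrete torus),
with vertices `ZMod N × ZMod N`.  A path is a list of steps `(μ, b)`: from `x`,
if `b = true` move to `x + e μ` picking up `U μ x`; if `b = false` move to
`x - e μ` picking up `(U μ (x - e μ))⁻¹`. -/

/-- Endpoint of a path starting at `x`. -/
def pathEnd {Vt : Type*} [AddGroup Vt] (e : Fin 2 → Vt) (x : Vt) :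
    List (Fin 2 × Bool) → Vt
  | [] => x
  | (μ, b) :: γ => pathEnd e (if b then x + e μ else x - e μ) γ

/-- The Wilson line of the gauge field `U` along a path starting at `x`. -/
def wline {G Vt : Type*} [Group G] [AddGroup Vt] (e : Fin 2 → Vt)
    (U : Fin 2 → Vt → G) (x : Vt) : List (Fin 2 × Bool) → G
  | [] => 1
  | (μ, b) :: γ =>
      if b then wline e U (x + e μ) γ * U μ x
      else wline e U (x - e μ) γ * (U μ (x - e μ))⁻¹

/-- The plaquette holonomy (field strength) based at the vertex `x`. -/
def plaq {G Vt : Type*} [Group G] [AddGroup Vt] (e : Fin 2 → Vt)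
    (U : Fin 2 → Vt → G) (x : Vt) : G :=
  (U 1 x)⁻¹ * (U 0 (x + e 1))⁻¹ * U 1 (x + e 0) * U 0 x


/-- Signed winding number of a path in the direction `μ`. -/
def wind (μ : Fin 2) (γ : List (Fin 2 × Bool)) : ℤ :=
  (γ.count (μ, true) : ℤ) - (γ.count (μ, false) : ℤ)




section Zprod
variable {G : Type*} [Group G]

def zP (f : ℤ → G) : ℕ → G
  | 0 => 1
  | n+1 => f n * zP f n

def zN (f : ℤ → G) : ℕ → G
  | 0 => 1
  | n+1 => (f (-((n : ℤ)+1)))⁻¹ * zN f n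

def zprod (f : ℤ → G) : ℤ → G
  | Int.ofNat n => zP f n
  | Int.negSucc n => zN f (n+1)

lemma zprod_succ (f : ℤ → G) (m : ℤ) : zprod f (m + 1) = f m * zprod f m := by
  cases m with
  | ofNat n =>
    have : (Int.ofNat n) + 1 = Int.ofNat (n+1) := rfl
    rw [this]; simp [zprod, zP]
  | negSucc n =>
    cases n with
    | zero =>
      have h1 : Int.negSucc 0 + 1 = Int.ofNat 0 := rfl
      rw [h1]
      have : f (Int.negSucc 0) = f (-(0+1 : ℤ)) := by norm_num [Int.negSucc_eq]
      simp [zprod, zP, zN, this]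
    | succ k =>
      have h1 : Int.negSucc (k+1) + 1 = Int.negSucc k := rfl
      rw [h1]
      have h2 : f (Int.negSucc (k+1)) = f (-(((k+1 : ℕ) : ℤ)+1)) := by congr 1
      simp [zprod, zN, h2]

end Zprod


/-- Standard basis of ℤ². -/
def eZ : Fin 2 → ℤ × ℤ := ![(1,0),(0,1)]

@[simp] lemma eZ0 : eZ 0 = (1,0) := rfl
@[simp] lemma eZ1 : eZ 1 = (0,1) := rfl

/-- Endpoint of a path on ℤ² is the start plus the winding vector. -/
lemma pathEnd_eZ (γ : List (Fin 2 × Bool)) : ∀ z : ℤ × ℤ,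
    pathEnd eZ z γ = z + (wind 0 γ, wind 1 γ) := by
  induction γ with
  | nil => intro z; simp [pathEnd, wind]
  | cons s γ ih =>
    obtain ⟨μ, b⟩ := s
    intro z
    fin_cases μ <;> cases b <;>
      simp [pathEnd, wind, ih, List.count_cons, Prod.ext_iff] <;> ring


section Lift
variable {G : Type*} [Group G] {N : ℕ}

/-- Projection ℤ² → (ℤ/N)². -/
def pr (N : ℕ) (z : ℤ × ℤ) : ZMod N × ZMod N := ((z.1 : ZMod N), (z.2 : ZMod N))

@[simp] lemma pr_add (z w : ℤ × ℤ) : pr N (z + w) = pr N z + pr N w := by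
  simp [pr, Prod.ext_iff]

@[simp] lemma pr_sub (z w : ℤ × ℤ) : pr N (z - w) = pr N z - pr N w := by
  simp [pr, Prod.ext_iff]

lemma pr_eZ (μ : Fin 2) : pr N (eZ μ) = (![(1,0),(0,1)] : Fin 2 → ZMod N × ZMod N) μ := by
  fin_cases μ <;> simp [pr, Prod.ext_iff]

lemma pathEnd_pr (e : Fin 2 → ZMod N × ZMod N) (he : e = ![(1, 0), (0, 1)])
    (γ : List (Fin 2 × Bool)) : ∀ z : ℤ × ℤ,
    pathEnd e (pr N z) γ = pr N (pathEnd eZ z γ) := by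
  subst he
  induction γ with
  | nil => intro z; rfl
  | cons s γ ih =>
    obtain ⟨μ, b⟩ := s
    intro z
    cases b <;> simp [pathEnd, ← pr_eZ, ← pr_add, ← pr_sub, ih]

lemma wline_pr (e : Fin 2 → ZMod N × ZMod N) (he : e = ![(1, 0), (0, 1)])
    (U : Fin 2 → ZMod N × ZMod N → G) (γ : List (Fin 2 × Bool)) : ∀ z : ℤ × ℤ,
    wline eZ (fun μ w => U μ (pr N w)) z γ = wline e U (pr N z) γ := by
  subst he
  induction γ with
  | nil => intro z; rfl
  | cons s γ ih =>
    obtain ⟨μ, b⟩ := s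
    intro z
    cases b <;> simp [wline, ← pr_eZ, ← pr_add, ← pr_sub, ih]

end Lift

section Potential
variable {G : Type*} [Group G] (V : Fin 2 → ℤ × ℤ → G)

def Th : ℤ → G := zprod (fun a => V 0 (a, 0))
def Tv (a : ℤ) : ℤ → G := zprod (fun b => V 1 (a, b))
def gpot (z : ℤ × ℤ) : G := Tv V z.1 z.2 * Th V z.1

variable (hf : ∀ z : ℤ × ℤ, plaq eZ V z = 1)
include hf

lemma flat' (z : ℤ × ℤ) :
    V 0 (z.1, z.2 + 1) * V 1 z = V 1 (z.1 + 1, z.2) * V 0 z := by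
  have h := hf z
  unfold plaq at h
  have h1 : z + eZ 1 = (z.1, z.2 + 1) := by simp [Prod.ext_iff]
  have h2 : z + eZ 0 = (z.1 + 1, z.2) := by simp [Prod.ext_iff]
  rw [h1, h2] at h
  have h3 : V 0 (z.1, z.2 + 1) * V 1 z *
      ((V 1 z)⁻¹ * (V 0 (z.1, z.2 + 1))⁻¹ * V 1 (z.1 + 1, z.2) * V 0 z)
      = V 0 (z.1, z.2 + 1) * V 1 z * 1 := by rw [h]
  simpa [mul_assoc] using h3.symm

lemma hEdge (a b : ℤ) :
    Tv V (a+1) b * V 0 (a,0) = V 0 (a,b) * Tv V a b := by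
  induction b using Int.induction_on with
  | zero => simp [Tv, zprod, zP]
  | succ k ih =>
    have s1 : Tv V (a+1) ((k:ℤ)+1) = V 1 (a+1, (k:ℤ)) * Tv V (a+1) (k:ℤ) := zprod_succ _ _
    have s2 : Tv V a ((k:ℤ)+1) = V 1 (a, (k:ℤ)) * Tv V a (k:ℤ) := zprod_succ _ _
    have hfl : V 0 (a, (k:ℤ)+1) * V 1 (a, (k:ℤ)) = V 1 (a+1, (k:ℤ)) * V 0 (a, (k:ℤ)) :=
      flat' V hf (a, (k:ℤ))
    calc Tv V (a+1) ((k:ℤ)+1) * V 0 (a,0)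
        = V 1 (a+1, (k:ℤ)) * (Tv V (a+1) (k:ℤ) * V 0 (a,0)) := by rw [s1, mul_assoc]
      _ = V 1 (a+1, (k:ℤ)) * (V 0 (a,(k:ℤ)) * Tv V a (k:ℤ)) := by rw [ih]
      _ = (V 1 (a+1, (k:ℤ)) * V 0 (a,(k:ℤ))) * Tv V a (k:ℤ) := by rw [mul_assoc]
      _ = (V 0 (a, (k:ℤ)+1) * V 1 (a, (k:ℤ))) * Tv V a (k:ℤ) := by rw [hfl]
      _ = V 0 (a, (k:ℤ)+1) * Tv V a ((k:ℤ)+1) := by rw [mul_assoc, s2]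
  | pred k ih =>
    have s1 : Tv V (a+1) (-(k:ℤ)) = V 1 (a+1, -(k:ℤ)-1) * Tv V (a+1) (-(k:ℤ)-1) := by
      have := zprod_succ (fun b => V 1 (a+1, b)) (-(k:ℤ)-1)
      simpa [Tv] using this
    have s2 : Tv V a (-(k:ℤ)) = V 1 (a, -(k:ℤ)-1) * Tv V a (-(k:ℤ)-1) := by
      have := zprod_succ (fun b => V 1 (a, b)) (-(k:ℤ)-1)
      simpa [Tv] using this
    have hfl : V 0 (a, -(k:ℤ)) * V 1 (a, -(k:ℤ)-1) = V 1 (a+1, -(k:ℤ)-1) * V 0 (a, -(k:ℤ)-1) := by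
      have := flat' V hf (a, -(k:ℤ)-1)
      simpa using this
    rw [s1, s2] at ih
    apply mul_left_cancel (a := V 1 (a+1, -(k:ℤ)-1))
    calc V 1 (a+1, -(k:ℤ)-1) * (Tv V (a+1) (-(k:ℤ)-1) * V 0 (a,0))
        = V 1 (a+1, -(k:ℤ)-1) * Tv V (a+1) (-(k:ℤ)-1) * V 0 (a,0) := by rw [mul_assoc]
      _ = V 0 (a, -(k:ℤ)) * (V 1 (a, -(k:ℤ)-1) * Tv V a (-(k:ℤ)-1)) := ih
      _ = (V 0 (a, -(k:ℤ)) * V 1 (a, -(k:ℤ)-1)) * Tv V a (-(k:ℤ)-1) := by rw [mul_assoc]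
      _ = (V 1 (a+1, -(k:ℤ)-1) * V 0 (a, -(k:ℤ)-1)) * Tv V a (-(k:ℤ)-1) := by rw [hfl]
      _ = V 1 (a+1, -(k:ℤ)-1) * (V 0 (a, -(k:ℤ)-1) * Tv V a (-(k:ℤ)-1)) := by rw [mul_assoc]

lemma gpot_H (z : ℤ × ℤ) : gpot V (z + (1,0)) = V 0 z * gpot V z := by
  obtain ⟨a, b⟩ := z
  have hz : ((a,b) : ℤ×ℤ) + (1,0) = (a+1, b) := by simp [Prod.ext_iff]
  have hth : Th V (a+1) = V 0 (a,0) * Th V a := zprod_succ _ _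
  rw [hz]
  show Tv V (a+1) b * Th V (a+1) = V 0 (a,b) * (Tv V a b * Th V a)
  rw [hth, ← mul_assoc, hEdge V hf, mul_assoc]

lemma gpot_V (z : ℤ × ℤ) : gpot V (z + (0,1)) = V 1 z * gpot V z := by
  obtain ⟨a, b⟩ := z
  have hz : ((a,b) : ℤ×ℤ) + (0,1) = (a, b+1) := by simp [Prod.ext_iff]
  have htv : Tv V a (b+1) = V 1 (a,b) * Tv V a b := zprod_succ _ _
  rw [hz]
  show Tv V a (b+1) * Th V a = V 1 (a,b) * (Tv V a b * Th V a)
  rw [htv, mul_assoc]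

lemma gpot_edge (μ : Fin 2) (z : ℤ × ℤ) : gpot V (z + eZ μ) = V μ z * gpot V z := by
  fin_cases μ
  · simpa using gpot_H V hf z
  · simpa using gpot_V V hf z

lemma wline_eq_gpot (γ : List (Fin 2 × Bool)) : ∀ z : ℤ × ℤ,
    wline eZ V z γ = gpot V (pathEnd eZ z γ) * (gpot V z)⁻¹ := by
  induction γ with
  | nil => intro z; simp [wline, pathEnd]
  | cons s γ ih =>
    obtain ⟨μ, b⟩ := s
    intro z
    cases b with
    | true =>
      have he := gpot_edge V hf μ z
      simp only [wline, pathEnd, if_true]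
      rw [ih (z + eZ μ)]
      rw [mul_assoc]
      congr 1
      rw [he]
      group
    | false =>
      have he := gpot_edge V hf μ (z - eZ μ)
      rw [sub_add_cancel] at he
      simp only [wline, pathEnd, if_neg Bool.false_ne_true]
      rw [ih (z - eZ μ)]
      rw [mul_assoc]
      congr 1
      rw [eq_comm, inv_eq_iff_mul_eq_one, he]
      group

end Potential

/-- A straight run of `|n|` steps in direction `μ`. -/
def runPath (μ : Fin 2) (n : ℤ) : List (Fin 2 × Bool) :=
  List.replicate n.natAbs (μ, decide (0 ≤ n))

lemma wind_runPath (μ ν : Fin 2) (n : ℤ) :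
    wind ν (runPath μ n) = if ν = μ then n else 0 := by
  unfold wind runPath
  rcases le_or_gt 0 n with h | h
  · rcases eq_or_ne ν μ with rfl | hne
    · simp [List.count_replicate, Int.natAbs_of_nonneg h, h]
    · simp [List.count_replicate, hne, Ne.symm hne, h]
  · have hd : decide (0 ≤ n) = false := by simp [not_le.mpr h]
    rcases eq_or_ne ν μ with rfl | hne
    · simp [List.count_replicate, hd]
      rw [abs_of_neg h]; ring
    · simp [List.count_replicate, hd, hne, Ne.symm hne]

lemma wind_append (μ : Fin 2) (l₁ l₂ : List (Fin 2 × Bool)) :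
    wind μ (l₁ ++ l₂) = wind μ l₁ + wind μ l₂ := by
  unfold wind
  rw [List.count_append, List.count_append]
  push_cast
  ring

/-- On the N×N periodic lattice with trivial plaquette
holonomy everywhere, two Wilson loops `w₁`, `w₂` winding the torus in the same
homology class but based at different vertices are conjugate: `w₂ = c w₁ c⁻¹`,
where `c` is the Wilson line along some path connecting the base point of `w₁`
to that of `w₂`. -/
theorem wilson_loops_conjugate_of_different_basepoints {G : Type*} [Group G] {N : ℕ}
    (e : Fin 2 → ZMod N × ZMod N) (he : e = ![(1, 0), (0, 1)])
    (U : Fin 2 → ZMod N × ZMod N → G)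
    (hflat : ∀ p : ZMod N × ZMod N, plaq e U p = 1)
    (x₁ x₂ : ZMod N × ZMod N) (γ₁ γ₂ : List (Fin 2 × Bool))
    (hloop₁ : pathEnd e x₁ γ₁ = x₁) (hloop₂ : pathEnd e x₂ γ₂ = x₂)
    (hwind : ∀ μ : Fin 2, wind μ γ₁ = wind μ γ₂) :
    ∃ δ : List (Fin 2 × Bool), pathEnd e x₁ δ = x₂ ∧
      wline e U x₂ γ₂ =
        wline e U x₁ δ * wline e U x₁ γ₁ * (wline e U x₁ δ)⁻¹ := by
  obtain ⟨a₁, ha₁⟩ := ZMod.intCast_surjective (n := N) x₁.1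
  obtain ⟨b₁, hb₁⟩ := ZMod.intCast_surjective (n := N) x₁.2
  obtain ⟨a₂, ha₂⟩ := ZMod.intCast_surjective (n := N) x₂.1
  obtain ⟨b₂, hb₂⟩ := ZMod.intCast_surjective (n := N) x₂.2
  set z₁ : ℤ × ℤ := (a₁, b₁) with hz₁def
  set z₂ : ℤ × ℤ := (a₂, b₂) with hz₂def
  have hp₁ : pr N z₁ = x₁ := by simp [pr, hz₁def, Prod.ext_iff, ha₁, hb₁]
  have hp₂ : pr N z₂ = x₂ := by simp [pr, hz₂def, Prod.ext_iff, ha₂, hb₂]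
  have hfV : ∀ z : ℤ × ℤ, plaq eZ (fun μ w => U μ (pr N w)) z = 1 := by
    intro z
    have h := hflat (pr N z)
    unfold plaq at h ⊢
    have e1 : pr N (z + eZ 1) = pr N z + e 1 := by rw [pr_add, pr_eZ, he]
    have e0 : pr N (z + eZ 0) = pr N z + e 0 := by rw [pr_add, pr_eZ, he]
    simp only []
    rw [e1, e0]
    exact h
  set w : ℤ × ℤ := (wind 0 γ₁, wind 1 γ₁) with hw
  have hEnd1 : pathEnd eZ z₁ γ₁ = z₁ + w := pathEnd_eZ γ₁ z₁
  have hEnd2 : pathEnd eZ z₂ γ₂ = z₂ + w := by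
    rw [pathEnd_eZ γ₂ z₂, hw, hwind 0, hwind 1]
  have hp₁w : pr N (z₁ + w) = x₁ := by
    rw [← hEnd1, ← pathEnd_pr e he γ₁ z₁, hp₁, hloop₁]
  set d : ℤ × ℤ := z₂ - z₁ with hd
  set δ : List (Fin 2 × Bool) := runPath 0 d.1 ++ runPath 1 d.2 with hδ
  have hwδ0 : wind 0 δ = d.1 := by
    rw [hδ, wind_append, wind_runPath, wind_runPath]
    norm_num
  have hwδ1 : wind 1 δ = d.2 := by
    rw [hδ, wind_append, wind_runPath, wind_runPath]
    norm_num
  have hδend : ∀ z : ℤ × ℤ, pathEnd eZ z δ = z + d := by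
    intro z
    rw [pathEnd_eZ, hwδ0, hwδ1]
  have hz1d : z₁ + d = z₂ := by rw [hd]; ring
  have hz1wd : z₁ + w + d = z₂ + w := by rw [hd]; ring
  have hδtorus : pathEnd e x₁ δ = x₂ := by
    rw [← hp₁, pathEnd_pr e he, hδend, hz1d, hp₂]
  have W1 : wline e U x₁ γ₁
      = gpot (fun μ v => U μ (pr N v)) (z₁ + w) * (gpot (fun μ v => U μ (pr N v)) z₁)⁻¹ := by
    rw [← hp₁, ← wline_pr e he U γ₁ z₁, wline_eq_gpot _ hfV, hEnd1]
  have W2 : wline e U x₂ γ₂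
      = gpot (fun μ v => U μ (pr N v)) (z₂ + w) * (gpot (fun μ v => U μ (pr N v)) z₂)⁻¹ := by
    rw [← hp₂, ← wline_pr e he U γ₂ z₂, wline_eq_gpot _ hfV, hEnd2]
  have C : wline e U x₁ δ
      = gpot (fun μ v => U μ (pr N v)) z₂ * (gpot (fun μ v => U μ (pr N v)) z₁)⁻¹ := by
    rw [← hp₁, ← wline_pr e he U δ z₁, wline_eq_gpot _ hfV, hδend, hz1d]
  have D : wline e U x₁ δ
      = gpot (fun μ v => U μ (pr N v)) (z₂ + w) * (gpot (fun μ v => U μ (pr N v)) (z₁ + w))⁻¹ := by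
    rw [← hp₁w, ← wline_pr e he U δ (z₁ + w), wline_eq_gpot _ hfV, hδend, hz1wd]
  refine ⟨δ, hδtorus, ?_⟩
  have e2 : gpot (fun μ v => U μ (pr N v)) (z₂ + w)
      = wline e U x₁ δ * gpot (fun μ v => U μ (pr N v)) (z₁ + w) := by rw [D]; group
  have e3 : gpot (fun μ v => U μ (pr N v)) z₂
      = wline e U x₁ δ * gpot (fun μ v => U μ (pr N v)) z₁ := by rw [C]; group
  rw [W2, e2, e3, W1]
  group
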